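/- Let G=(V,E) be a graph, let K₂ be the complete graph with vertices a,b, and let P = (G ⊕ K₂, p, r) be a 3-dimensional sphere packing with generic radii. Then there exists a Möbius-equivalent sphere packing P' = (G ⊕ K₂, p', r') such that: (i) p'_v = (x_v, y_v, 0) for each v ∈ V; (ii) p'_a = (0,0,−1), p'_b = (0,0,1) and r'_a = r'_b = 1; and (iii) the restriction of r' to V is injective and the set {r'_v : v ∈ V} is algebraically independent over ℚ. -/

import Mathlib

set_option maxHeartbeats 1000000


noncomputable section

/-- A `d`-dimensional sphere packing with contact graph `G`, centres `p` and radii `r`: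
the spheres have disjoint interiors and two spheres touch iff the vertices are adjacent. -/
def IsSpherePacking {V : Type*} (d : ℕ) (G : SimpleGraph V)
    (p : V → EuclideanSpace ℝ (Fin d)) (r : V → ℝ) : Prop :=
  (∀ v, 0 < r v) ∧
  ∀ v w : V, v ≠ w →
    r v + r w ≤ dist (p v) (p w) ∧ (dist (p v) (p w) = r v + r w ↔ G.Adj v w)

/-- The radii are generic: injective and algebraically independent over `ℚ`. -/
def GenericRadii {V : Type*} (r : V → ℝ) : Prop :=
  Function.Injective r ∧ AlgebraicIndependent ℚ r

/-- The join `G ⊕ K₂` of `G` with the complete graph on two new vertices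
(the two elements of `Fin 2`). -/
def joinK2 {V : Type*} (G : SimpleGraph V) : SimpleGraph (V ⊕ Fin 2) where
  Adj x y :=
    match x, y with
    | Sum.inl u, Sum.inl v => G.Adj u v
    | Sum.inl _, Sum.inr _ => True
    | Sum.inr _, Sum.inl _ => True
    | Sum.inr i, Sum.inr j => i ≠ j
  symm := by
    constructor
    rintro (u | i) (v | j) h
    · exact h.symm
    · trivial
    · trivial
    · exact h.symm
  loopless := by
    constructor
    rintro (u | i) h
    · exact G.loopless.irrefl u h
    · exact h rfl

/-- A 3-dimensional Möbius transform with singularity `b₀`: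
`φ(u) = a₀ + λ A(u − b₀) / ‖u − b₀‖^τ` with `λ ≠ 0`, `τ ∈ {0, 2}` and `A` a linear
isometry of `ℝ³`. -/
def IsMobiusMap (φ : EuclideanSpace ℝ (Fin 3) → EuclideanSpace ℝ (Fin 3))
    (b₀ : EuclideanSpace ℝ (Fin 3)) : Prop :=
  ∃ (a₀ : EuclideanSpace ℝ (Fin 3)) (lam : ℝ)
    (A : EuclideanSpace ℝ (Fin 3) ≃ₗᵢ[ℝ] EuclideanSpace ℝ (Fin 3)) (τ : ℕ),
    lam ≠ 0 ∧ (τ = 0 ∨ τ = 2) ∧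
    ∀ u, u ≠ b₀ → φ u = a₀ + (lam / ‖u - b₀‖ ^ τ) • A (u - b₀)

/-- Two sphere packings (given by centres and radii over the same vertex set) are
Möbius-equivalent if some Möbius transform maps each sphere of the first packing onto
the corresponding sphere of the second. -/
def MobiusEquivalent {V : Type*} (p p' : V → EuclideanSpace ℝ (Fin 3))
    (r r' : V → ℝ) : Prop :=
  ∃ φ b₀, IsMobiusMap φ b₀ ∧
    ∀ v : V, b₀ ∉ Metric.sphere (p v) (r v) ∧
      φ '' Metric.sphere (p v) (r v) = Metric.sphere (p' v) (r' v)

namespace SPP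



private lemma eq_of_sq_eq {a b : ℝ} (ha : 0 ≤ a) (hb : 0 ≤ b) (h : a ^ 2 = b ^ 2) : a = b :=
  le_antisymm (by nlinarith) (by nlinarith)

variable {E' : Type*} [NormedAddCommGroup E'] [InnerProductSpace ℝ E']

/-- inversion with centre `c` and power `k`. -/
def sinv (c : E') (k : ℝ) (u : E') : E' := c + (k / ‖u - c‖ ^ 2) • (u - c)

lemma sinv_sub_center (c : E') (k : ℝ) (u : E') :
    sinv c k u - c = (k / ‖u - c‖ ^ 2) • (u - c) := by
  simp [sinv]

lemma norm_sinv_sub_sq (c : E') (k : ℝ) {u : E'} (hu : u ≠ c) :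
    ‖sinv c k u - c‖ ^ 2 = k ^ 2 / ‖u - c‖ ^ 2 := by
  have h0 : ‖u - c‖ ≠ 0 := by
    simpa [sub_eq_zero] using hu
  rw [sinv_sub_center, norm_smul, Real.norm_eq_abs, mul_pow, sq_abs, div_pow]
  field_simp

lemma sinv_ne_center (c : E') {k : ℝ} (hk : k ≠ 0) {u : E'} (hu : u ≠ c) :
    sinv c k u ≠ c := by
  intro h
  have h1 : ‖sinv c k u - c‖ ^ 2 = k ^ 2 / ‖u - c‖ ^ 2 := norm_sinv_sub_sq c k hu
  have h0 : ‖u - c‖ ≠ 0 := by simpa [sub_eq_zero] using hu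
  rw [h, sub_self, norm_zero] at h1
  have : (0:ℝ) < k ^ 2 / ‖u - c‖ ^ 2 := by positivity
  simp at h1
  rw [← h1] at this
  norm_num at this

lemma sinv_sinv (c : E') {k : ℝ} (hk : k ≠ 0) {u : E'} (hu : u ≠ c) :
    sinv c k (sinv c k u) = u := by
  have h0 : ‖u - c‖ ≠ 0 := by simpa [sub_eq_zero] using hu
  have h1 : ‖sinv c k u - c‖ ^ 2 = k ^ 2 / ‖u - c‖ ^ 2 := norm_sinv_sub_sq c k hu
  have h2 : sinv c k (sinv c k u) = c + (k / (k ^ 2 / ‖u - c‖ ^ 2)) • ((k / ‖u - c‖ ^ 2) • (u - c)) := by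
    rw [sinv, h1, sinv_sub_center]
  rw [h2, smul_smul]
  have : k / (k ^ 2 / ‖u - c‖ ^ 2) * (k / ‖u - c‖ ^ 2) = 1 := by
    field_simp
  rw [this, one_smul]
  abel

section sphere
open Metric RealInnerProductSpace

lemma dist_sinv_of_mem_sphere {c p x : E'} {ρ k : ℝ} (hρ : 0 < ρ)
    (hpow : ‖p - c‖ ^ 2 - ρ ^ 2 ≠ 0) (hx : dist x p = ρ) :
    dist (sinv c k x) (c + (k / (‖p - c‖ ^ 2 - ρ ^ 2)) • (p - c))
      = |k| * ρ / |‖p - c‖ ^ 2 - ρ ^ 2| := by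
  have hxc : x ≠ c := by
    rintro rfl
    apply hpow
    have : ‖p - x‖ = ρ := by rw [← dist_eq_norm, dist_comm] ; exact hx
    rw [this] ; ring
  have hX : ‖x - c‖ ≠ 0 := by simpa [sub_eq_zero] using hxc
  set X := ‖x - c‖ ^ 2 with hXdef
  set P := ‖p - c‖ ^ 2 with hPdef
  have hX0 : X ≠ 0 := pow_ne_zero 2 hX
  have hI : @inner ℝ E' _ (x - c) (p - c) = (X + P - ρ ^ 2) / 2 := by
    have h1 : ‖x - p‖ ^ 2 = ρ ^ 2 := by rw [← dist_eq_norm, hx]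
    have h2 : x - p = (x - c) - (p - c) := by abel
    rw [h2, norm_sub_sq_real] at h1
    rw [← hXdef, ← hPdef] at h1
    linarith
  apply eq_of_sq_eq dist_nonneg (by positivity)
  rw [dist_eq_norm]
  have hsub : sinv c k x - (c + (k / (P - ρ ^ 2)) • (p - c))
      = (k / X) • (x - c) - (k / (P - ρ ^ 2)) • (p - c) := by
    rw [sinv, ← hXdef] ; abel
  rw [hsub, norm_sub_sq_real, real_inner_smul_left, real_inner_smul_right, hI,
    norm_smul, norm_smul, mul_pow, mul_pow, Real.norm_eq_abs, Real.norm_eq_abs,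
    sq_abs, sq_abs, ← hXdef, ← hPdef]
  have habs2 : (|k| * ρ / |P - ρ ^ 2|) ^ 2 = k ^ 2 * ρ ^ 2 / (P - ρ ^ 2) ^ 2 := by
    rw [div_pow, mul_pow, sq_abs, sq_abs]
  rw [habs2]
  field_simp
  ring

lemma sinv_image_sphere {c p : E'} {ρ k : ℝ} (hk : 0 < k) (hρ : 0 < ρ)
    (hpow : ‖p - c‖ ^ 2 - ρ ^ 2 ≠ 0) :
    sinv c k '' sphere p ρ
      = sphere (c + (k / (‖p - c‖ ^ 2 - ρ ^ 2)) • (p - c)) (k * ρ / |‖p - c‖ ^ 2 - ρ ^ 2|) := by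
  set pow := ‖p - c‖ ^ 2 - ρ ^ 2 with hpowdef
  set p' := c + (k / pow) • (p - c) with hp'def
  set ρ' := k * ρ / |pow| with hρ'def
  have hρ' : 0 < ρ' := by
    rw [hρ'def]
    have : 0 < |pow| := abs_pos.mpr hpow
    positivity
  -- image sphere data for the sphere (p', ρ')
  have hP' : ‖p' - c‖ ^ 2 = (k / pow) ^ 2 * ‖p - c‖ ^ 2 := by
    rw [hp'def]
    have : c + (k / pow) • (p - c) - c = (k / pow) • (p - c) := by abel
    rw [this, norm_smul, mul_pow, Real.norm_eq_abs, sq_abs]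
  have hPc : ‖p - c‖ ^ 2 = pow + ρ ^ 2 := by rw [hpowdef] ; ring
  have hρ'sq : ρ' ^ 2 = k ^ 2 * ρ ^ 2 / pow ^ 2 := by
    rw [hρ'def, div_pow, mul_pow, sq_abs]
  have hpow' : ‖p' - c‖ ^ 2 - ρ' ^ 2 = k ^ 2 / pow := by
    rw [hP', hρ'sq, hPc, div_pow]
    field_simp
    ring
  have hpow'0 : ‖p' - c‖ ^ 2 - ρ' ^ 2 ≠ 0 := by
    rw [hpow']
    positivity
  have habs : |pow| ≠ 0 := abs_ne_zero.mpr hpow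
  ext y
  constructor
  · rintro ⟨x, hx, rfl⟩
    rw [mem_sphere] at hx ⊢
    have := dist_sinv_of_mem_sphere (c := c) (k := k) hρ hpow hx
    rw [abs_of_pos hk] at this
    exact this
  · intro hy
    rw [mem_sphere] at hy
    have hyc : y ≠ c := by
      intro h0
      apply hpow'0
      have h1 : ‖p' - c‖ = ρ' := by rw [← hy, h0, dist_eq_norm, norm_sub_rev]
      rw [h1] ; ring
    refine ⟨sinv c k y, ?_, sinv_sinv c (ne_of_gt hk) hyc⟩
    rw [mem_sphere]
    have h2 := dist_sinv_of_mem_sphere (c := c) (k := k) hρ' hpow'0 hy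
    -- identify the centre and radius
    have hcen : c + (k / (‖p' - c‖ ^ 2 - ρ' ^ 2)) • (p' - c) = p := by
      rw [hpow']
      have h3 : p' - c = (k / pow) • (p - c) := by rw [hp'def] ; abel
      rw [h3, smul_smul]
      have h4 : k / (k ^ 2 / pow) * (k / pow) = 1 := by
        field_simp
      rw [h4, one_smul] ; abel
    have hrad : |k| * ρ' / |‖p' - c‖ ^ 2 - ρ' ^ 2| = ρ := by
      rw [hpow', hρ'def, abs_of_pos hk]
      rw [abs_div, abs_of_pos (by positivity : (0:ℝ) < k ^ 2)]
      field_simp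
    rw [hcen, hrad] at h2
    exact h2

/-- key algebraic identity for transferring the packing property. -/
lemma packing_transfer_sq {c p₁ p₂ : E'} {k ρ₁ ρ₂ a₁ a₂ : ℝ}
    (h₁ : a₁ = ‖p₁ - c‖ ^ 2 - ρ₁ ^ 2) (h₂ : a₂ = ‖p₂ - c‖ ^ 2 - ρ₂ ^ 2)
    (ha₁ : a₁ ≠ 0) (ha₂ : a₂ ≠ 0) :
    dist (c + (k / a₁) • (p₁ - c)) (c + (k / a₂) • (p₂ - c)) ^ 2
      - (k * ρ₁ / a₁ + k * ρ₂ / a₂) ^ 2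
    = (k ^ 2 / (a₁ * a₂)) * (dist p₁ p₂ ^ 2 - (ρ₁ + ρ₂) ^ 2) := by
  have hsub : c + (k / a₁) • (p₁ - c) - (c + (k / a₂) • (p₂ - c))
      = (k / a₁) • (p₁ - c) - (k / a₂) • (p₂ - c) := by abel
  have hd : dist p₁ p₂ ^ 2 = ‖p₁ - c‖ ^ 2 - 2 * @inner ℝ E' _ (p₁ - c) (p₂ - c) + ‖p₂ - c‖ ^ 2 := by
    rw [dist_eq_norm]
    have : p₁ - p₂ = (p₁ - c) - (p₂ - c) := by abel
    rw [this, norm_sub_sq_real]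
  rw [dist_eq_norm, hsub, norm_sub_sq_real, real_inner_smul_left, real_inner_smul_right,
    norm_smul, norm_smul, mul_pow, mul_pow, Real.norm_eq_abs, Real.norm_eq_abs, sq_abs, sq_abs,
    hd]
  have e₁ : ‖p₁ - c‖ ^ 2 = a₁ + ρ₁ ^ 2 := by rw [h₁] ; ring
  have e₂ : ‖p₂ - c‖ ^ 2 = a₂ + ρ₂ ^ 2 := by rw [h₂] ; ring
  rw [e₁, e₂]
  field_simp
  ring

lemma le_iff_sq_sub {x y : ℝ} (hx : 0 ≤ x) (hy : 0 < y) : y ≤ x ↔ 0 ≤ x ^ 2 - y ^ 2 := by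
  constructor
  · intro h ; nlinarith
  · intro h
    have h1 : Real.sqrt (y ^ 2) ≤ Real.sqrt (x ^ 2) := Real.sqrt_le_sqrt (by linarith)
    rwa [Real.sqrt_sq hy.le, Real.sqrt_sq hx] at h1

lemma eq_iff_sq_sub {x y : ℝ} (hx : 0 ≤ x) (hy : 0 < y) : x = y ↔ x ^ 2 - y ^ 2 = 0 := by
  constructor
  · intro h ; rw [h] ; ring
  · intro h ; exact eq_of_sq_eq hx hy.le (by linarith)

lemma sign_transfer {a b a' b' t : ℝ} (ha : 0 ≤ a) (hb : 0 < b) (ha' : 0 ≤ a') (hb' : 0 < b')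
    (ht : 0 < t) (h : a ^ 2 - b ^ 2 = t * (a' ^ 2 - b' ^ 2)) :
    (b ≤ a ↔ b' ≤ a') ∧ (a = b ↔ a' = b') := by
  constructor
  · rw [le_iff_sq_sub ha hb, le_iff_sq_sub ha' hb', h]
    exact mul_nonneg_iff_of_pos_left ht
  · rw [eq_iff_sq_sub ha hb, eq_iff_sq_sub ha' hb', h, mul_eq_zero]
    constructor
    · rintro (h1 | h1)
      · exact absurd h1 (ne_of_gt ht)
      · exact h1
    · intro h1 ; right ; exact h1

end sphere



open MvPolynomial

instance mvCountable {σ : Type*} [Countable σ] : Countable (MvPolynomial σ ℚ) :=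
  (AddMonoidAlgebra.coeff_injective (R := ℚ) (M := σ →₀ ℕ)).countable

/-- conversion of a 2-variable mv-polynomial over ℝ into an iterated polynomial -/
def toIter : MvPolynomial (Fin 2) ℝ →+* Polynomial (Polynomial ℝ) :=
  (MvPolynomial.aeval (![Polynomial.C Polynomial.X, Polynomial.X] : Fin 2 → Polynomial (Polynomial ℝ))).toRingHom

def fromIter : Polynomial (Polynomial ℝ) →+* MvPolynomial (Fin 2) ℝ :=
  Polynomial.eval₂RingHom
    (Polynomial.eval₂RingHom (MvPolynomial.C : ℝ →+* MvPolynomial (Fin 2) ℝ) (X 0))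
    (X 1)

lemma fromIter_toIter (g : MvPolynomial (Fin 2) ℝ) : fromIter (toIter g) = g := by
  have h : (fromIter.comp toIter) = RingHom.id (MvPolynomial (Fin 2) ℝ) := by
    apply MvPolynomial.ringHom_ext
    · intro r
      simp [toIter, fromIter]
    · intro i
      fin_cases i <;> simp [toIter, fromIter]
  exact DFunLike.congr_fun h g

lemma toIter_injective : Function.Injective toIter := by
  intro a b h
  have := congrArg fromIter h
  rwa [fromIter_toIter, fromIter_toIter] at this

lemma eval_toIter (g : MvPolynomial (Fin 2) ℝ) (x : Fin 2 → ℝ) :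
    MvPolynomial.eval x g
      = Polynomial.eval (x 1) (Polynomial.map (Polynomial.evalRingHom (x 0)) (toIter g)) := by
  have h : (MvPolynomial.eval x : MvPolynomial (Fin 2) ℝ →+* ℝ)
      = ((Polynomial.evalRingHom (x 1)).comp
          (Polynomial.mapRingHom (Polynomial.evalRingHom (x 0)))).comp toIter := by
    apply MvPolynomial.ringHom_ext
    · intro r ; simp [toIter]
    · intro i ; fin_cases i <;> simp [toIter]
  exact DFunLike.congr_fun h g

/-- Existence of a "generic" pair `(h₁, h₂)` relative to countably many constants `s`. -/
lemma genericPair {σ : Type*} [Countable σ] (s : σ → ℝ) (T : ℝ) :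
    ∃ h₁ h₂ : ℝ, T < h₁ ∧ 0 < h₂ ∧ h₂ < 1 ∧
      ∀ Q : MvPolynomial (σ ⊕ Fin 2) ℚ,
        MvPolynomial.aeval (Sum.elim s ![h₁, h₂]) Q = 0 →
        ∀ x : Fin 2 → ℝ, MvPolynomial.aeval (Sum.elim s x) Q = 0 := by
  classical
  set Θ : MvPolynomial (σ ⊕ Fin 2) ℚ →ₐ[ℚ] MvPolynomial (Fin 2) ℝ :=
    MvPolynomial.aeval (Sum.elim (fun i => MvPolynomial.C (s i)) MvPolynomial.X) with hΘ
  have key : ∀ (x : Fin 2 → ℝ) (Q : MvPolynomial (σ ⊕ Fin 2) ℚ),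
      MvPolynomial.aeval (Sum.elim s x) Q = MvPolynomial.eval x (Θ Q) := by
    intro x Q
    have h : (MvPolynomial.aeval (Sum.elim s x) : MvPolynomial (σ ⊕ Fin 2) ℚ →ₐ[ℚ] ℝ).toRingHom
        = ((MvPolynomial.eval x : MvPolynomial (Fin 2) ℝ →+* ℝ)).comp Θ.toRingHom := by
      apply MvPolynomial.ringHom_ext
      · intro r ; simp [hΘ]
      · rintro (i | j) <;> simp [hΘ]
    exact DFunLike.congr_fun h Q
  -- countable collection of nonzero iterated polynomials
  set Bad₁ : Set ℝ :=
    ⋃ g ∈ {g : MvPolynomial (Fin 2) ℝ | g ∈ Set.range Θ ∧ g ≠ 0},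
      {t : ℝ | Polynomial.map (Polynomial.evalRingHom t) (toIter g) = 0} with hBad₁
  have hBad₁c : Bad₁.Countable := by
    apply Set.Countable.biUnion
    · exact Set.Countable.mono (Set.sep_subset _ _)
        (Set.countable_range Θ)
    · intro g hg
      obtain ⟨-, hg0⟩ := hg
      have hiter : toIter g ≠ 0 := fun h => hg0 (by
        have := congrArg fromIter h
        rwa [fromIter_toIter, map_zero] at this)
      obtain ⟨j, hj⟩ : ∃ j, (toIter g).coeff j ≠ 0 := by
        by_contra hcon
        push_neg at hcon
        exact hiter (Polynomial.ext fun j => by rw [hcon j, Polynomial.coeff_zero])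
      apply Set.Countable.mono ?_ ((Polynomial.finite_setOf_isRoot hj).countable)
      intro t ht
      simp only [Set.mem_setOf_eq] at ht ⊢
      have : (Polynomial.map (Polynomial.evalRingHom t) (toIter g)).coeff j = 0 := by
        rw [ht, Polynomial.coeff_zero]
      rw [Polynomial.coeff_map] at this
      exact this
  -- choose h₁
  have huncount : ∀ B : Set ℝ, B.Countable → ∀ a b : ℝ, a < b → ∃ t ∈ Set.Ioo a b, t ∉ B := by
    intro B hB a b hab
    by_contra hcon
    push_neg at hcon
    have hsub : Set.Ioo a b ⊆ B := fun t ht => by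
      by_contra h
      exact h (hcon t ht)
    have : (Set.Ioo a b).Countable := hB.mono hsub
    rw [← Set.countable_coe_iff, ← Cardinal.mk_le_aleph0_iff] at this
    rw [Cardinal.mk_Ioo_real hab] at this
    exact absurd (lt_of_lt_of_le Cardinal.aleph0_lt_continuum this) (lt_irrefl _)
  obtain ⟨h₁, hh₁mem, hh₁⟩ := huncount Bad₁ hBad₁c T (T + 1) (by linarith)
  -- nonzero after first specialisation
  have step1 : ∀ g : MvPolynomial (Fin 2) ℝ, g ∈ Set.range Θ → g ≠ 0 →
      Polynomial.map (Polynomial.evalRingHom h₁) (toIter g) ≠ 0 := by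
    intro g hg hg0 hzero
    exact hh₁ (Set.mem_biUnion (by exact ⟨hg, hg0⟩) hzero)
  -- choose h₂
  set Bad₂ : Set ℝ :=
    ⋃ g ∈ {g : MvPolynomial (Fin 2) ℝ | g ∈ Set.range Θ ∧ g ≠ 0},
      {u : ℝ | Polynomial.IsRoot (Polynomial.map (Polynomial.evalRingHom h₁) (toIter g)) u}
    with hBad₂
  have hBad₂c : Bad₂.Countable := by
    apply Set.Countable.biUnion
    · exact Set.Countable.mono (Set.sep_subset _ _) (Set.countable_range Θ)
    · intro g hg
      obtain ⟨hgr, hg0⟩ := hg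
      exact (Polynomial.finite_setOf_isRoot (step1 g hgr hg0)).countable
  obtain ⟨h₂, hh₂mem, hh₂⟩ := huncount Bad₂ hBad₂c 0 1 one_pos
  refine ⟨h₁, h₂, hh₁mem.1, hh₂mem.1, hh₂mem.2, ?_⟩
  intro Q hQ x
  rw [key] at hQ ⊢
  by_cases hg0 : Θ Q = 0
  · rw [hg0, map_zero]
  · exfalso
    rw [eval_toIter] at hQ
    have hmap : Polynomial.map (Polynomial.evalRingHom (![h₁, h₂] 0)) (toIter (Θ Q)) ≠ 0 := by
      have : (![h₁, h₂] : Fin 2 → ℝ) 0 = h₁ := rfl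
      rw [this]
      exact step1 _ ⟨Q, rfl⟩ hg0
    have hroot : Polynomial.IsRoot
        (Polynomial.map (Polynomial.evalRingHom h₁) (toIter (Θ Q))) h₂ := by
      have h0 : (![h₁, h₂] : Fin 2 → ℝ) 0 = h₁ := rfl
      have h1 : (![h₁, h₂] : Fin 2 → ℝ) 1 = h₂ := rfl
      rw [h0, h1] at hQ
      exact hQ
    exact hh₂ (Set.mem_biUnion (by exact ⟨⟨Q, rfl⟩, hg0⟩) hroot)


section Geometry

open Metric MvPolynomial

abbrev E3 := EuclideanSpace ℝ (Fin 3)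

lemma exists_orthonormal_pair (n : E3) (hn : ‖n‖ = 1) :
    ∃ m₁ m₂ : E3, ‖m₁‖ = 1 ∧ ‖m₂‖ = 1 ∧ @inner ℝ _ _ n m₁ = 0 ∧ @inner ℝ _ _ n m₂ = 0 ∧
      @inner ℝ _ _ m₁ m₂ = 0 := by
  have hn0 : n ≠ 0 := by
    intro h
    rw [h, norm_zero] at hn
    norm_num at hn
  have hrank : Module.finrank ℝ ((Submodule.span ℝ {n})ᗮ : Submodule ℝ E3) = 2 := by
    have h1 := Submodule.finrank_add_finrank_orthogonal (𝕜 := ℝ) (Submodule.span ℝ {n})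
    rw [finrank_span_singleton hn0, finrank_euclideanSpace_fin] at h1
    omega
  set K : Submodule ℝ E3 := (Submodule.span ℝ {n})ᗮ with hK
  have B := stdOrthonormalBasis ℝ K
  set B' := B.reindex (finCongr hrank) with hB'
  have hBo : Orthonormal ℝ B' := B'.orthonormal
  refine ⟨(B' 0 : E3), (B' 1 : E3), ?_, ?_, ?_, ?_, ?_⟩
  · exact hBo.1 0
  · exact hBo.1 1
  · exact (B' 0).2 n (Submodule.mem_span_singleton_self n)
  · exact (B' 1).2 n (Submodule.mem_span_singleton_self n)
  · exact hBo.2 (by norm_num : (0 : Fin 2) ≠ 1)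

lemma shift_image_sphere (A : E3 ≃ₗᵢ[ℝ] E3) (o c : E3) (ρ : ℝ) :
    (fun u => A (u - o)) '' Metric.sphere c ρ = Metric.sphere (A (c - o)) ρ := by
  ext y
  constructor
  · rintro ⟨u, hu, rfl⟩
    rw [mem_sphere] at hu ⊢
    rw [dist_eq_norm, ← map_sub]
    have : u - o - (c - o) = u - c := by abel
    rw [this, A.norm_map, ← dist_eq_norm]
    exact hu
  · intro hy
    rw [mem_sphere] at hy
    refine ⟨A.symm y + o, ?_, ?_⟩
    · rw [mem_sphere, dist_eq_norm]
      have h1 : A.symm y + o - c = A.symm y - (c - o) := by abel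
      have h2 : A.symm y - (c - o) = A.symm (y - A (c - o)) := by
        rw [map_sub, A.symm_apply_apply]
      rw [h1, h2, A.symm.norm_map, ← dist_eq_norm]
      exact hy
    · simp


lemma Dv_pos_aux {sd w1 w2 cst T h₁ h₂ : ℝ} (hsd : 0 < sd)
    (hb : |w1| + |w2| + |cst| ≤ sd * (T - 1)) (hT1 : 1 ≤ T) (h₁T : T < h₁)
    (h₂0 : 0 < h₂) (h₂1 : h₂ < 1) :
    0 < sd * (h₁ ^ 2 + h₂ ^ 2) + w1 * h₁ + w2 * h₂ + cst := by
  have h₁1 : 1 < h₁ := lt_of_le_of_lt hT1 h₁T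
  have h₁pos : 0 < h₁ := by linarith
  have e1 : -|w1| * h₁ ≤ w1 * h₁ := mul_le_mul_of_nonneg_right (neg_abs_le w1) h₁pos.le
  have e2 : -|w2| ≤ w2 * h₂ := by nlinarith [neg_abs_le w2, le_abs_self w2, abs_nonneg w2]
  have e3 : -|cst| ≤ cst := neg_abs_le _
  have e5 : |w1| * h₁ + |w2| + |cst| ≤ (|w1| + |w2| + |cst|) * h₁ := by
    nlinarith [abs_nonneg w2, abs_nonneg cst]
  have d1 : T - 1 < h₁ := by linarith
  have d2 : sd * (T - 1) < sd * h₁ := mul_lt_mul_of_pos_left d1 hsd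
  have d3 : sd * (T - 1) * h₁ < sd * h₁ * h₁ := mul_lt_mul_of_pos_right d2 h₁pos
  have d4 : (|w1| + |w2| + |cst|) * h₁ ≤ sd * (T - 1) * h₁ :=
    mul_le_mul_of_nonneg_right hb h₁pos.le
  have c2 : (|w1| + |w2| + |cst|) * h₁ < sd * h₁ ^ 2 := by nlinarith
  have c1 : sd * h₁ ^ 2 ≤ sd * (h₁ ^ 2 + h₂ ^ 2) := by nlinarith [sq_nonneg h₂]
  linarith

lemma main_standard {V : Type*} [Fintype V] (G : SimpleGraph V)
    (p : V ⊕ Fin 2 → E3) (r : V ⊕ Fin 2 → ℝ)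
    (hP : IsSpherePacking 3 (joinK2 G) p r) (hralg : AlgebraicIndependent ℚ r)
    (ia ib : Fin 2) (hne : ia ≠ ib) (hgt : r (Sum.inr ib) < r (Sum.inr ia))
    (e : E3) (he : ‖e‖ = 1) :
    ∃ (p' : V ⊕ Fin 2 → E3) (r' : V ⊕ Fin 2 → ℝ),
      IsSpherePacking 3 (joinK2 G) p' r' ∧ MobiusEquivalent p p' r r' ∧
      (∀ v : V, @inner ℝ _ _ (p' (Sum.inl v)) e = 0) ∧
      p' (Sum.inr ia) = -e ∧ p' (Sum.inr ib) = e ∧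
      r' (Sum.inr ia) = 1 ∧ r' (Sum.inr ib) = 1 ∧
      Function.Injective (fun v : V => r' (Sum.inl v)) ∧
      AlgebraicIndependent ℚ (fun v : V => r' (Sum.inl v)) := by
  classical
  set a : V ⊕ Fin 2 := Sum.inr ia with ha
  set b : V ⊕ Fin 2 := Sum.inr ib with hb
  have hfin2 : ∀ i : Fin 2, i = ia ∨ i = ib := by
    intro i
    have h1 : ia.val ≠ ib.val := fun h => hne (Fin.ext h)
    have h2 := i.isLt
    have h3 := ia.isLt
    have h4 := ib.isLt
    rw [Fin.ext_iff, Fin.ext_iff]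
    omega
  have hr0 : ∀ x, 0 < r x := hP.1
  have hra : 0 < r a := hr0 a
  have hrb : 0 < r b := hr0 b
  have hsum : 0 < r a + r b := by linarith
  have hdiff : 0 < r a - r b := by linarith
  have hne_ab : a ≠ b := fun h => hne (Sum.inr_injective h)
  have hadj_ab : (joinK2 G).Adj a b := hne
  have hd_ab : dist (p a) (p b) = r a + r b := (hP.2 a b hne_ab).2.mpr hadj_ab
  have hne_va : ∀ v : V, (Sum.inl v : V ⊕ Fin 2) ≠ a := fun v h => by simp [ha] at h
  have hne_vb : ∀ v : V, (Sum.inl v : V ⊕ Fin 2) ≠ b := fun v h => by simp [hb] at h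
  have hta : ∀ v : V, dist (p (Sum.inl v)) (p a) = r (Sum.inl v) + r a :=
    fun v => (hP.2 (Sum.inl v) a (hne_va v)).2.mpr trivial
  have htb : ∀ v : V, dist (p (Sum.inl v)) (p b) = r (Sum.inl v) + r b :=
    fun v => (hP.2 (Sum.inl v) b (hne_vb v)).2.mpr trivial
  -- the unit vector from a to b and the tangency point q
  set n : E3 := (r a + r b)⁻¹ • (p b - p a) with hn_def
  have hpb_pa : p b - p a = (r a + r b) • n := by
    rw [hn_def, smul_smul, mul_inv_cancel₀ (ne_of_gt hsum), one_smul]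
  have hnorm_ab : ‖p b - p a‖ = r a + r b := by
    rw [← dist_eq_norm, dist_comm, hd_ab]
  have hn1 : ‖n‖ = 1 := by
    rw [hn_def, norm_smul, hnorm_ab, Real.norm_eq_abs, abs_of_pos (by positivity)]
    field_simp
  have hnn : @inner ℝ _ _ n n = 1 := by
    rw [real_inner_self_eq_norm_sq, hn1]; norm_num
  set q : E3 := p a + r a • n with hq_def
  have hqa : p a - q = -(r a • n) := by rw [hq_def]; abel
  have hqb : p b - q = r b • n := by
    rw [hq_def]
    have h1 : p b - (p a + r a • n) = (p b - p a) - r a • n := by abel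
    rw [h1, hpb_pa, ← sub_smul]
    congr 1
    ring
  obtain ⟨m₁, m₂, hm₁, hm₂, hnm₁, hnm₂, hm₁m₂⟩ := exists_orthonormal_pair n hn1
  have hm₁n : @inner ℝ _ _ m₁ n = 0 := by rw [real_inner_comm]; exact hnm₁
  have hm₂n : @inner ℝ _ _ m₂ n = 0 := by rw [real_inner_comm]; exact hnm₂
  have hm₂m₁ : @inner ℝ _ _ m₂ m₁ = 0 := by rw [real_inner_comm]; exact hm₁m₂
  have hm₁m₁ : @inner ℝ _ _ m₁ m₁ = 1 := by rw [real_inner_self_eq_norm_sq, hm₁]; norm_num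
  have hm₂m₂ : @inner ℝ _ _ m₂ m₂ = 1 := by rw [real_inner_self_eq_norm_sq, hm₂]; norm_num
  -- geometric identities for the vertices of V
  set rv : V → ℝ := fun v => r (Sum.inl v) with hrv_def
  have hrvpos : ∀ v, 0 < rv v := fun v => hr0 _
  have hIval : ∀ v, @inner ℝ _ _ (p (Sum.inl v) - p a) n
      = r a + rv v * (r a - r b) / (r a + r b) := by
    intro v
    have hexp : ‖p (Sum.inl v) - p b‖ ^ 2
        = ‖p (Sum.inl v) - p a‖ ^ 2
          - 2 * ((r a + r b) * @inner ℝ _ _ (p (Sum.inl v) - p a) n) + (r a + r b) ^ 2 := by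
      have h1 : p (Sum.inl v) - p b = (p (Sum.inl v) - p a) - (r a + r b) • n := by
        rw [← hpb_pa]; abel
      rw [h1, norm_sub_sq_real, real_inner_smul_right, norm_smul, Real.norm_eq_abs,
        abs_of_pos hsum, hn1, mul_pow]
      ring
    have hnb : ‖p (Sum.inl v) - p b‖ = rv v + r b := by rw [← dist_eq_norm, htb v]
    have hna : ‖p (Sum.inl v) - p a‖ = rv v + r a := by rw [← dist_eq_norm, hta v]
    rw [hnb, hna] at hexp
    have key : (r a + r b) * @inner ℝ _ _ (p (Sum.inl v) - p a) n
        = r a * (r a + r b) + rv v * (r a - r b) := by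
      linear_combination ((1:ℝ)/2) * hexp
    have h2 : (r a + r b) * @inner ℝ _ _ (p (Sum.inl v) - p a) n
        = (r a + r b) * (r a + rv v * (r a - r b) / (r a + r b)) := by
      rw [key]
      field_simp
    exact mul_left_cancel₀ (ne_of_gt hsum) h2
  have hipn : ∀ v, @inner ℝ _ _ (p (Sum.inl v) - q) n = rv v * (r a - r b) / (r a + r b) := by
    intro v
    have h1 : p (Sum.inl v) - q = (p (Sum.inl v) - p a) - r a • n := by rw [hq_def]; abel
    rw [h1, inner_sub_left, real_inner_smul_left, hnn, hIval v]
    ring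
  have hsd0 : ∀ v, ‖p (Sum.inl v) - q‖ ^ 2 - rv v ^ 2 = 4 * r a * r b * rv v / (r a + r b) := by
    intro v
    have h1 : p (Sum.inl v) - q = (p (Sum.inl v) - p a) - r a • n := by rw [hq_def]; abel
    have h2 : ‖p (Sum.inl v) - q‖ ^ 2 = ‖p (Sum.inl v) - p a‖ ^ 2
        - 2 * (r a * @inner ℝ _ _ (p (Sum.inl v) - p a) n) + r a ^ 2 := by
      rw [h1, norm_sub_sq_real, real_inner_smul_right, norm_smul, Real.norm_eq_abs,
        abs_of_pos hra, hn1, mul_pow]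
      ring
    have hna : ‖p (Sum.inl v) - p a‖ = rv v + r a := by rw [← dist_eq_norm, hta v]
    rw [h2, hna, hIval v]
    field_simp
    ring
  set sd : V → ℝ := fun v => ‖p (Sum.inl v) - q‖ ^ 2 - rv v ^ 2 with hsd_def
  have hsdval : ∀ v, sd v = 4 * r a * r b * rv v / (r a + r b) := fun v => hsd0 v
  have hsdpos : ∀ v, 0 < sd v := by
    intro v
    rw [hsdval v]
    have := hrvpos v
    positivity
  -- the constants
  set cC : ℝ := 4 * r a * r b / (r a - r b) with hcC
  have hcCpos : 0 < cC := by rw [hcC]; positivity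
  set sA : V → ℝ := fun v => cC * (cC + 2 * r a) * rv v / r a with hsA
  set w1 : V → ℝ := fun v => -2 * cC * @inner ℝ _ _ (p (Sum.inl v) - q) m₁ with hw1
  set w2 : V → ℝ := fun v => -2 * cC * @inner ℝ _ _ (p (Sum.inl v) - q) m₂ with hw2
  set cst : V → ℝ := fun v => sd v - 2 * cC * (rv v * (r a - r b) / (r a + r b)) + cC ^ 2
    with hcst
  set sfun : V × Fin 5 → ℝ := fun x => ![sA x.1, sd x.1, w1 x.1, w2 x.1, cst x.1] x.2
    with hsfun
  set T : ℝ := 1 + ∑ v : V, (|w1 v| + |w2 v| + |cst v|) / sd v with hT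
  have hw_nonneg : ∀ v : V, 0 ≤ (|w1 v| + |w2 v| + |cst v|) / sd v := by
    intro v
    have h1 := hsdpos v
    positivity
  have hT1 : 1 ≤ T := by
    rw [hT]
    have h1 : (0:ℝ) ≤ ∑ v : V, (|w1 v| + |w2 v| + |cst v|) / sd v :=
      Finset.sum_nonneg fun v _ => hw_nonneg v
    linarith
  have hBle : ∀ v : V, |w1 v| + |w2 v| + |cst v| ≤ sd v * (T - 1) := by
    intro v
    have h2 := Finset.single_le_sum (f := fun v => (|w1 v| + |w2 v| + |cst v|) / sd v)
      (fun i _ => hw_nonneg i) (Finset.mem_univ v)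
    have hb1 : (|w1 v| + |w2 v| + |cst v|) / sd v ≤ T - 1 := by
      rw [hT]; linarith
    rw [div_le_iff₀ (hsdpos v)] at hb1
    linarith
  obtain ⟨h₁, h₂, hh₁T, hh₂0, hh₂1, hgen⟩ := genericPair sfun T
  have hh₁pos : 0 < h₁ := by linarith
  -- the inversion centre (introduced as opaque constants to keep the context light)
  obtain ⟨S, hS⟩ : ∃ S : ℝ, S = 1 + h₁ ^ 2 + h₂ ^ 2 := ⟨_, rfl⟩
  have hSpos : 0 < S := by rw [hS]; positivity
  obtain ⟨σ, hσ⟩ : ∃ σ : ℝ, σ = cC / S := ⟨_, rfl⟩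
  have hσpos : 0 < σ := by rw [hσ]; positivity
  have hσS : σ * S = cC := by rw [hσ]; field_simp
  obtain ⟨u1, hu1⟩ : ∃ u : E3, u = n + h₁ • m₁ + h₂ • m₂ := ⟨_, rfl⟩
  have hu1n : @inner ℝ _ _ n u1 = 1 := by
    rw [hu1]
    simp only [inner_add_right, real_inner_smul_right, hnn, hnm₁, hnm₂]
    ring
  have hu1u1 : @inner ℝ _ _ u1 u1 = S := by
    rw [hu1, hS]
    simp only [inner_add_right, inner_add_left, real_inner_smul_right, real_inner_smul_left,
      hnn, hnm₁, hnm₂, hm₁n, hm₂n, hm₁m₂, hm₂m₁, hm₁m₁, hm₂m₂]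
    ring
  obtain ⟨b₀, hb₀⟩ : ∃ c : E3, c = q + σ • u1 := ⟨_, rfl⟩
  -- the powers of b₀ with respect to each sphere
  obtain ⟨pw, hpwx⟩ : ∃ f : V ⊕ Fin 2 → ℝ, ∀ x, f x = ‖p x - b₀‖ ^ 2 - r x ^ 2 :=
    ⟨_, fun _ => rfl⟩
  have hpwa : pw a = σ * (cC + 2 * r a) := by
    rw [hpwx a]
    have h1 : p a - b₀ = -(r a • n + σ • u1) := by rw [hb₀, hq_def]; abel
    rw [h1, norm_neg, ← real_inner_self_eq_norm_sq]
    simp only [inner_add_right, inner_add_left, real_inner_smul_right, real_inner_smul_left,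
      hnn, hu1n]
    have h2 : @inner ℝ _ _ u1 n = 1 := by rw [real_inner_comm]; exact hu1n
    rw [h2, hu1u1]
    linear_combination σ * hσS
  have hpwb : pw b = σ * (cC - 2 * r b) := by
    rw [hpwx b]
    have h1 : p b - b₀ = r b • n - σ • u1 := by
      rw [hb₀]
      have h2 : p b - (q + σ • u1) = (p b - q) - σ • u1 := by abel
      rw [h2, hqb]
    rw [h1, ← real_inner_self_eq_norm_sq]
    simp only [inner_sub_right, inner_sub_left, real_inner_smul_right, real_inner_smul_left,
      hnn, hu1n]
    have h2 : @inner ℝ _ _ u1 n = 1 := by rw [real_inner_comm]; exact hu1n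
    rw [h2, hu1u1]
    linear_combination σ * hσS
  obtain ⟨Dv, hDvx⟩ : ∃ f : V → ℝ,
      ∀ v, f v = sd v * (h₁ ^ 2 + h₂ ^ 2) + w1 v * h₁ + w2 v * h₂ + cst v :=
    ⟨_, fun _ => rfl⟩
  have hpwv : ∀ v, pw (Sum.inl v) * S = Dv v := by
    intro v
    have hipnv := hipn v
    have him : @inner ℝ _ _ (p (Sum.inl v) - q) (p (Sum.inl v) - q) = sd v + rv v ^ 2 := by
      rw [real_inner_self_eq_norm_sq]
      have h1 : sd v = ‖p (Sum.inl v) - q‖ ^ 2 - rv v ^ 2 := rfl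
      rw [h1]; ring
    have hw1v : w1 v = -2 * cC * @inner ℝ _ _ (p (Sum.inl v) - q) m₁ := rfl
    have hw2v : w2 v = -2 * cC * @inner ℝ _ _ (p (Sum.inl v) - q) m₂ := rfl
    have hcstv : cst v = sd v - 2 * cC * (rv v * (r a - r b) / (r a + r b)) + cC ^ 2 := rfl
    set Pv : E3 := p (Sum.inl v) - q with hPv
    rw [hpwx (Sum.inl v), hDvx v]
    have h1 : p (Sum.inl v) - b₀ = Pv - σ • u1 := by rw [hb₀, hPv]; abel
    rw [h1, ← real_inner_self_eq_norm_sq]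
    have hcomm : @inner ℝ _ _ u1 Pv = @inner ℝ _ _ Pv u1 := real_inner_comm _ _
    have hdec : @inner ℝ _ _ Pv u1 = @inner ℝ _ _ Pv n
        + h₁ * @inner ℝ _ _ Pv m₁ + h₂ * @inner ℝ _ _ Pv m₂ := by
      rw [hu1]
      simp only [inner_add_right, real_inner_smul_right]
    simp only [inner_sub_right, inner_sub_left, real_inner_smul_right, real_inner_smul_left,
      hu1u1, hcomm, hdec, him, hipnv]
    rw [hw1v, hw2v, hcstv]
    linear_combination (sd v) * hS + (σ * S + cC - 2 * (rv v * (r a - r b) / (r a + r b)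
      + h₁ * @inner ℝ _ _ Pv m₁ + h₂ * @inner ℝ _ _ Pv m₂)) * hσS
  have hDvpos : ∀ v, 0 < Dv v := by
    intro v
    rw [hDvx v]
    exact Dv_pos_aux (hsdpos v) (hBle v) hT1 hh₁T hh₂0 hh₂1
  -- inversion power, radii and centres
  obtain ⟨k, hk_def⟩ : ∃ k : ℝ, k = σ * (cC + 2 * r a) / r a := ⟨_, rfl⟩
  have hkpos : 0 < k := by
    rw [hk_def]
    apply div_pos (mul_pos hσpos (by linarith)) hra
  have hka : k * r a = pw a := by
    rw [hk_def, hpwa]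
    field_simp
  have hkb : k * r b = pw b := by
    rw [hk_def, hpwb, hcC]
    field_simp
    ring
  have hpwpos : ∀ x, 0 < pw x := by
    intro x
    rcases x with v | i
    · have h1 : pw (Sum.inl v) = Dv v / S := by
        rw [eq_div_iff (ne_of_gt hSpos)]
        exact hpwv v
      rw [h1]
      exact div_pos (hDvpos v) hSpos
    · have hcC2b : 0 < cC - 2 * r b := by
        have h1 : cC - 2 * r b = 2 * r b * (r a + r b) / (r a - r b) := by
          rw [hcC]
          field_simp
          ring
        rw [h1]
        positivity
      rcases hfin2 i with rfl | rfl
      · rw [← ha, hpwa]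
        have h2 : 0 < cC + 2 * r a := by linarith
        positivity
      · rw [← hb, hpwb]
        positivity
  obtain ⟨r', hr'x⟩ : ∃ f : V ⊕ Fin 2 → ℝ, ∀ x, f x = k * r x / pw x := ⟨_, fun _ => rfl⟩
  have hr'pos : ∀ x, 0 < r' x := fun x => by
    rw [hr'x x]
    exact div_pos (mul_pos hkpos (hr0 x)) (hpwpos x)
  have hr'a : r' a = 1 := by
    rw [hr'x a, hka, div_self (ne_of_gt (hpwpos a))]
  have hr'b : r' b = 1 := by
    rw [hr'x b, hkb, div_self (ne_of_gt (hpwpos b))]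
  obtain ⟨p₁, hp₁x⟩ : ∃ f : V ⊕ Fin 2 → E3, ∀ x, f x = b₀ + (k / pw x) • (p x - b₀) :=
    ⟨_, fun _ => rfl⟩
  have htrans : ∀ x y, ((r' x + r' y ≤ dist (p₁ x) (p₁ y) ↔ r x + r y ≤ dist (p x) (p y)) ∧
      (dist (p₁ x) (p₁ y) = r' x + r' y ↔ dist (p x) (p y) = r x + r y)) := by
    intro x y
    have hsq := packing_transfer_sq (c := b₀) (p₁ := p x) (p₂ := p y) (k := k)
      (ρ₁ := r x) (ρ₂ := r y) (a₁ := pw x) (a₂ := pw y) (hpwx x) (hpwx y)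
      (ne_of_gt (hpwpos x)) (ne_of_gt (hpwpos y))
    rw [← hp₁x x, ← hp₁x y, ← hr'x x, ← hr'x y] at hsq
    have hb' : 0 < r x + r y := by have := hr0 x; have := hr0 y; linarith
    have hbb : 0 < r' x + r' y := by have := hr'pos x; have := hr'pos y; linarith
    have ht : 0 < k ^ 2 / (pw x * pw y) := by
      have := hpwpos x; have := hpwpos y
      positivity
    exact sign_transfer dist_nonneg hbb dist_nonneg hb' ht hsq
  have hd1ab : dist (p₁ a) (p₁ b) = 2 := by
    have h1 := ((htrans a b).2).mpr hd_ab
    rw [h1, hr'a, hr'b]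
    norm_num
  -- move to standard position by a rigid motion
  obtain ⟨o, ho⟩ : ∃ o : E3, o = (2:ℝ)⁻¹ • (p₁ a + p₁ b) := ⟨_, rfl⟩
  obtain ⟨μ, hμ⟩ : ∃ μ : E3, μ = (2:ℝ)⁻¹ • (p₁ a - p₁ b) := ⟨_, rfl⟩
  have hμa : p₁ a - o = μ := by rw [ho, hμ]; module
  have hμb : p₁ b - o = -μ := by rw [ho, hμ]; module
  have hμ1 : ‖μ‖ = 1 := by
    have h1 : ‖p₁ a - p₁ b‖ = 2 := by rw [← dist_eq_norm, hd1ab]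
    rw [hμ, norm_smul, h1, Real.norm_eq_abs, abs_of_pos (by norm_num : (0:ℝ) < (2:ℝ)⁻¹)]
    norm_num
  have hμe : ‖μ‖ = ‖-e‖ := by rw [hμ1, norm_neg, he]
  obtain ⟨A, hAμ⟩ : ∃ A : E3 ≃ₗᵢ[ℝ] E3, A μ = -e :=
    ⟨Submodule.reflection (Submodule.span ℝ {μ - -e})ᗮ, Submodule.reflection_sub hμe⟩
  obtain ⟨p', hp'x⟩ : ∃ f : V ⊕ Fin 2 → E3, ∀ x, f x = A (p₁ x - o) := ⟨_, fun _ => rfl⟩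
  have hdist' : ∀ x y, dist (p' x) (p' y) = dist (p₁ x) (p₁ y) := by
    intro x y
    rw [hp'x x, hp'x y, dist_eq_norm, ← map_sub]
    have h3 : (p₁ x - o) - (p₁ y - o) = p₁ x - p₁ y := by abel
    rw [h3, A.norm_map, ← dist_eq_norm]
  have hpack' : IsSpherePacking 3 (joinK2 G) p' r' := by
    refine ⟨hr'pos, fun x y hxy => ?_⟩
    rw [hdist']
    exact ⟨((htrans x y).1).mpr (hP.2 x y hxy).1,
      ((htrans x y).2).trans (hP.2 x y hxy).2⟩
  have hp'a : p' a = -e := by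
    rw [hp'x a, hμa, hAμ]
  have hp'b : p' b = e := by
    rw [hp'x b, hμb, map_neg, hAμ, neg_neg]
  have hip : ∀ v : V, @inner ℝ _ _ (p' (Sum.inl v)) e = 0 := by
    intro v
    have d1 : dist (p' (Sum.inl v)) (p' a) = r' (Sum.inl v) + 1 := by
      rw [hdist', ((htrans (Sum.inl v) a).2).mpr (hta v), hr'a]
    have d2 : dist (p' (Sum.inl v)) (p' b) = r' (Sum.inl v) + 1 := by
      rw [hdist', ((htrans (Sum.inl v) b).2).mpr (htb v), hr'b]
    rw [hp'a] at d1
    rw [hp'b] at d2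
    have h3 : ‖p' (Sum.inl v) + e‖ = ‖p' (Sum.inl v) - e‖ := by
      have e1 : p' (Sum.inl v) + e = p' (Sum.inl v) - (-e) := by abel
      rw [e1, ← dist_eq_norm, ← dist_eq_norm, d1, d2]
    have h4 : ‖p' (Sum.inl v) + e‖ ^ 2 = ‖p' (Sum.inl v) - e‖ ^ 2 := by rw [h3]
    rw [norm_add_sq_real, norm_sub_sq_real] at h4
    linarith
  -- the Möbius transform
  have hmob : MobiusEquivalent p p' r r' := by
    refine ⟨fun u => A (sinv b₀ k u - o), b₀,
      ⟨A (b₀ - o), k, A, 2, ne_of_gt hkpos, Or.inr rfl, ?_⟩, ?_⟩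
    · intro u hu
      show A (sinv b₀ k u - o) = A (b₀ - o) + (k / ‖u - b₀‖ ^ 2) • A (u - b₀)
      have h1 : sinv b₀ k u - o = (b₀ - o) + (k / ‖u - b₀‖ ^ 2) • (u - b₀) := by
        rw [sinv]; abel
      rw [h1, map_add, map_smul]
    · intro x
      constructor
      · intro hmem
        rw [Metric.mem_sphere] at hmem
        have h1 : pw x = 0 := by
          have h2 : ‖p x - b₀‖ = r x := by
            rw [← dist_eq_norm, dist_comm]
            exact hmem
          rw [hpwx x, h2]
          ring
        exact absurd h1 (ne_of_gt (hpwpos x))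
      · have himg1 : sinv b₀ k '' Metric.sphere (p x) (r x)
            = Metric.sphere (p₁ x) (r' x) := by
          have h1 := sinv_image_sphere (c := b₀) (p := p x) (ρ := r x) (k := k)
            hkpos (hr0 x) (by rw [← hpwx x]; exact ne_of_gt (hpwpos x))
          rw [h1]
          have h2 : b₀ + (k / (‖p x - b₀‖ ^ 2 - r x ^ 2)) • (p x - b₀) = p₁ x := by
            rw [hp₁x x, ← hpwx x]
          have h3 : k * r x / |‖p x - b₀‖ ^ 2 - r x ^ 2| = r' x := by
            rw [← hpwx x, abs_of_pos (hpwpos x), ← hr'x x]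
          rw [h2, h3]
        have hcomp : (fun u => A (sinv b₀ k u - o)) '' Metric.sphere (p x) (r x)
            = (fun u => A (u - o)) '' (sinv b₀ k '' Metric.sphere (p x) (r x)) := by
          rw [← Set.image_comp]
          rfl
        rw [hcomp, himg1, shift_image_sphere, ← hp'x x]
  -- genericity of the new radii
  have halg : AlgebraicIndependent ℚ (fun v : V => r' (Sum.inl v)) := by
    rw [algebraicIndependent_iff]
    intro P hPeval
    set d := P.totalDegree with hd_deg
    have hmle : ∀ m ∈ P.support, ∀ v : V, m v ≤ d := by
      intro m hm v
      have h1 : m v ≤ m.sum fun _ e => e := by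
        rcases Nat.eq_zero_or_pos (m v) with h | h
        · omega
        · have hv : v ∈ m.support := Finsupp.mem_support_iff.mpr (by omega)
          have h2 := Finset.single_le_sum (f := fun i => m i) (fun i _ => Nat.zero_le _) hv
          rw [Finsupp.sum]
          exact h2
      exact h1.trans (MvPolynomial.le_totalDegree hm)
    obtain ⟨DD, hDD_def⟩ : ∃ f : V → MvPolynomial ((V × Fin 5) ⊕ Fin 2) ℚ,
        ∀ v, f v = X (Sum.inl (v, 1)) * (X (Sum.inr 0) ^ 2 + X (Sum.inr 1) ^ 2)
          + X (Sum.inl (v, 2)) * X (Sum.inr 0) + X (Sum.inl (v, 3)) * X (Sum.inr 1)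
          + X (Sum.inl (v, 4)) := ⟨_, fun _ => rfl⟩
    obtain ⟨Gh, hGh_def⟩ : ∃ g : MvPolynomial ((V × Fin 5) ⊕ Fin 2) ℚ,
        g = ∑ m ∈ P.support, MvPolynomial.C (coeff m P)
          * ∏ v : V, (X (Sum.inl (v, 0)) ^ m v * DD v ^ (d - m v)) := ⟨_, rfl⟩
    have hs0 : ∀ v : V, sfun (v, 0) = sA v := fun v => rfl
    have hs1 : ∀ v : V, sfun (v, 1) = sd v := fun v => rfl
    have hs2 : ∀ v : V, sfun (v, 2) = w1 v := fun v => rfl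
    have hs3 : ∀ v : V, sfun (v, 3) = w2 v := fun v => rfl
    have hs4 : ∀ v : V, sfun (v, 4) = cst v := fun v => rfl
    have hDDval : ∀ v : V,
        MvPolynomial.aeval (Sum.elim sfun ![h₁, h₂]) (DD v) = Dv v := by
      intro v
      rw [hDD_def v]
      simp only [map_add, map_mul, map_pow, aeval_X, Sum.elim_inl, Sum.elim_inr]
      have e0 : (![h₁, h₂] : Fin 2 → ℝ) 0 = h₁ := rfl
      have e1 : (![h₁, h₂] : Fin 2 → ℝ) 1 = h₂ := rfl
      rw [e0, e1, hs1, hs2, hs3, hs4, hDvx v]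
    have hDD0val : ∀ v : V,
        MvPolynomial.aeval (Sum.elim sfun ![(0:ℝ), 0]) (DD v) = cst v := by
      intro v
      rw [hDD_def v]
      simp only [map_add, map_mul, map_pow, aeval_X, Sum.elim_inl, Sum.elim_inr]
      have e0 : (![(0:ℝ), 0] : Fin 2 → ℝ) 0 = 0 := rfl
      have e1 : (![(0:ℝ), 0] : Fin 2 → ℝ) 1 = 0 := rfl
      rw [e0, e1, hs1, hs2, hs3, hs4]
      ring
    have hkS : k * S = cC * (cC + 2 * r a) / r a := by
      rw [hk_def, hσ]
      field_simp
    have hr'Dv : ∀ v : V, r' (Sum.inl v) * Dv v = sA v := by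
      intro v
      have hpw0 : pw (Sum.inl v) ≠ 0 := ne_of_gt (hpwpos (Sum.inl v))
      have hsAv : sA v = cC * (cC + 2 * r a) * rv v / r a := rfl
      have hrvv : rv v = r (Sum.inl v) := rfl
      calc r' (Sum.inl v) * Dv v
          = k * r (Sum.inl v) / pw (Sum.inl v) * (pw (Sum.inl v) * S) := by
            rw [hr'x (Sum.inl v), hpwv v]
        _ = k * r (Sum.inl v) * S * (pw (Sum.inl v) / pw (Sum.inl v)) := by ring
        _ = (k * S) * r (Sum.inl v) := by rw [div_self hpw0, mul_one]; ring
        _ = cC * (cC + 2 * r a) / r a * r (Sum.inl v) := by rw [hkS]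
        _ = sA v := by rw [hsAv, hrvv]; ring
    -- first evaluation: at the generic pair
    have hGhval : MvPolynomial.aeval (Sum.elim sfun ![h₁, h₂]) Gh = 0 := by
      have hPexp : MvPolynomial.aeval (fun v : V => r' (Sum.inl v)) P
          = ∑ m ∈ P.support, (algebraMap ℚ ℝ) (coeff m P)
            * ∏ v : V, (r' (Sum.inl v)) ^ m v := by
        rw [MvPolynomial.aeval_def, MvPolynomial.eval₂_eq']
      rw [hGh_def, map_sum]
      have hterm : ∀ m ∈ P.support,
          MvPolynomial.aeval (Sum.elim sfun ![h₁, h₂])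
              (MvPolynomial.C (coeff m P) * ∏ v : V, (X (Sum.inl (v, 0)) ^ m v * DD v ^ (d - m v)))
            = (∏ v : V, Dv v ^ d)
              * ((algebraMap ℚ ℝ) (coeff m P) * ∏ v : V, (r' (Sum.inl v)) ^ m v) := by
        intro m hm
        rw [map_mul, aeval_C, map_prod]
        have hper : ∀ v : V,
            MvPolynomial.aeval (Sum.elim sfun ![h₁, h₂]) (X (Sum.inl (v, 0)) ^ m v * DD v ^ (d - m v))
              = Dv v ^ d * (r' (Sum.inl v)) ^ m v := by
          intro v
          rw [map_mul, map_pow, map_pow, aeval_X, Sum.elim_inl, hDDval v, hs0,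
            ← hr'Dv v, ← pow_sub_mul_pow (Dv v) (hmle m hm v), mul_pow]
          ring
        rw [Finset.prod_congr rfl fun v _ => hper v, Finset.prod_mul_distrib]
        ring
      rw [Finset.sum_congr rfl hterm, ← Finset.mul_sum, ← hPexp, hPeval, mul_zero]
    -- specialise h to zero
    have hE1 : ∑ m ∈ P.support, (algebraMap ℚ ℝ) (coeff m P)
        * ∏ v : V, (sA v ^ m v * cst v ^ (d - m v)) = 0 := by
      have hx0 := hgen Gh hGhval ![0, 0]
      rw [hGh_def, map_sum] at hx0
      have hterm : ∀ m ∈ P.support,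
          MvPolynomial.aeval (Sum.elim sfun ![(0:ℝ), 0])
              (MvPolynomial.C (coeff m P) * ∏ v : V, (X (Sum.inl (v, 0)) ^ m v * DD v ^ (d - m v)))
            = (algebraMap ℚ ℝ) (coeff m P) * ∏ v : V, (sA v ^ m v * cst v ^ (d - m v)) := by
        intro m hm
        rw [map_mul, aeval_C, map_prod]
        congr 1
        refine Finset.prod_congr rfl fun v _ => ?_
        rw [map_mul, map_pow, map_pow, aeval_X, Sum.elim_inl, hDD0val v, hs0]
      rw [Finset.sum_congr rfl hterm] at hx0
      exact hx0
    -- transfer to a polynomial identity in the original radii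
    obtain ⟨Xa, hXa⟩ : ∃ t : MvPolynomial (V ⊕ Fin 2) ℚ, t = X (Sum.inr ia) := ⟨_, rfl⟩
    obtain ⟨Xb, hXb⟩ : ∃ t : MvPolynomial (V ⊕ Fin 2) ℚ, t = X (Sum.inr ib) := ⟨_, rfl⟩
    obtain ⟨PA, hPA_def⟩ : ∃ f : V → MvPolynomial (V ⊕ Fin 2) ℚ,
        ∀ v, f v = 8 * Xa * Xb * (Xa + Xb) ^ 2 * X (Sum.inl v) := ⟨_, fun _ => rfl⟩
    obtain ⟨PC, hPC_def⟩ : ∃ f : V → MvPolynomial (V ⊕ Fin 2) ℚ,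
        ∀ v, f v = 16 * Xa ^ 2 * Xb ^ 2 * (Xa + Xb)
          - 4 * Xa * Xb * X (Sum.inl v) * (Xa - Xb) ^ 2 := ⟨_, fun _ => rfl⟩
    obtain ⟨R, hR_def⟩ : ∃ t : MvPolynomial (V ⊕ Fin 2) ℚ,
        t = ∑ m ∈ P.support, MvPolynomial.C (coeff m P)
          * ∏ v : V, (PA v ^ m v * PC v ^ (d - m v)) := ⟨_, rfl⟩
    obtain ⟨Ef, hEf⟩ : ∃ t : ℝ, t = (r a - r b) ^ 2 * (r a + r b) := ⟨_, rfl⟩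
    have haX : MvPolynomial.aeval r Xa = r a := by rw [hXa, aeval_X, ← ha]
    have hbX : MvPolynomial.aeval r Xb = r b := by rw [hXb, aeval_X, ← hb]
    have hPAval : ∀ v : V, MvPolynomial.aeval r (PA v) = sA v * Ef := by
      intro v
      rw [hPA_def v]
      simp only [map_mul, map_add, map_pow, map_ofNat, aeval_X, haX, hbX]
      have hsAv : sA v = cC * (cC + 2 * r a) * rv v / r a := rfl
      have hrvv : rv v = r (Sum.inl v) := rfl
      rw [hsAv, hEf, hcC, ← hrvv]
      field_simp
      ring
    have hPCval : ∀ v : V, MvPolynomial.aeval r (PC v) = cst v * Ef := by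
      intro v
      rw [hPC_def v]
      simp only [map_mul, map_add, map_sub, map_pow, map_ofNat, aeval_X, haX, hbX]
      have hcstv : cst v = sd v - 2 * cC * (rv v * (r a - r b) / (r a + r b)) + cC ^ 2 := rfl
      have hrvv : rv v = r (Sum.inl v) := rfl
      rw [hcstv, hsdval v, hEf, hcC, ← hrvv]
      field_simp
      ring
    have hRval : MvPolynomial.aeval r R = 0 := by
      rw [hR_def, map_sum]
      have hterm : ∀ m ∈ P.support,
          MvPolynomial.aeval r (MvPolynomial.C (coeff m P) * ∏ v : V, (PA v ^ m v * PC v ^ (d - m v)))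
            = (Ef ^ d) ^ (Fintype.card V)
              * ((algebraMap ℚ ℝ) (coeff m P) * ∏ v : V, (sA v ^ m v * cst v ^ (d - m v))) := by
        intro m hm
        rw [map_mul, aeval_C, map_prod]
        have hper : ∀ v : V,
            MvPolynomial.aeval r (PA v ^ m v * PC v ^ (d - m v))
              = Ef ^ d * (sA v ^ m v * cst v ^ (d - m v)) := by
          intro v
          rw [map_mul, map_pow, map_pow, hPAval v, hPCval v, mul_pow, mul_pow]
          have hsplit : Ef ^ m v * Ef ^ (d - m v) = Ef ^ d := by
            rw [← pow_add]
            congr 1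
            have := hmle m hm v
            omega
          calc sA v ^ m v * Ef ^ m v * (cst v ^ (d - m v) * Ef ^ (d - m v))
              = (Ef ^ m v * Ef ^ (d - m v)) * (sA v ^ m v * cst v ^ (d - m v)) := by ring
            _ = Ef ^ d * (sA v ^ m v * cst v ^ (d - m v)) := by rw [hsplit]
        rw [Finset.prod_congr rfl fun v _ => hper v, Finset.prod_mul_distrib,
          Finset.prod_const, Finset.card_univ]
        ring
      rw [Finset.sum_congr rfl hterm, ← Finset.mul_sum, hE1, mul_zero]
    have hR0 : R = 0 := by
      have hinj2 := algebraicIndependent_iff_injective_aeval.mp hralg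
      apply hinj2
      rw [hRval, map_zero]
    -- conclude that P itself vanishes
    obtain ⟨Y, hY⟩ : ∃ f : V → FractionRing (MvPolynomial V ℚ),
        ∀ v, f v = algebraMap (MvPolynomial V ℚ) (FractionRing (MvPolynomial V ℚ)) (X v) :=
      ⟨_, fun _ => rfl⟩
    have hmapinj : Function.Injective
        (algebraMap (MvPolynomial V ℚ) (FractionRing (MvPolynomial V ℚ))) :=
      IsFractionRing.injective _ _
    have hYden : ∀ v : V, (18 : FractionRing (MvPolynomial V ℚ)) + Y v ≠ 0 := by
      intro v h
      have h2 : algebraMap (MvPolynomial V ℚ) (FractionRing (MvPolynomial V ℚ))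
          (18 + X v) = 0 := by
        rw [map_add, map_ofNat, ← hY v]
        exact h
      have h3 : ((18 : MvPolynomial V ℚ) + X v) = 0 := by
        apply hmapinj
        rw [map_zero]
        exact h2
      have h4 := congrArg (MvPolynomial.coeff 0) h3
      have h18c : ((18 : MvPolynomial V ℚ)) = MvPolynomial.C (18 : ℚ) :=
        (map_ofNat (MvPolynomial.C : ℚ →+* MvPolynomial V ℚ) 18).symm
      rw [MvPolynomial.coeff_add, MvPolynomial.coeff_zero_X, h18c, MvPolynomial.coeff_C,
        MvPolynomial.coeff_zero] at h4
      norm_num at h4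
    obtain ⟨g, hg⟩ : ∃ g : V ⊕ Fin 2 → FractionRing (MvPolynomial V ℚ),
        g = Sum.elim (fun v => 24 * Y v / (18 + Y v)) (fun j => if j = ia then 2 else 1) :=
      ⟨_, rfl⟩
    have hga : MvPolynomial.aeval g Xa = 2 := by
      rw [hXa, aeval_X, hg]
      simp
    have hgb : MvPolynomial.aeval g Xb = 1 := by
      rw [hXb, aeval_X, hg]
      simp [hne.symm]
    have hgv : ∀ v : V, MvPolynomial.aeval g (X (Sum.inl v) : MvPolynomial (V ⊕ Fin 2) ℚ)
        = 24 * Y v / (18 + Y v) := by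
      intro v
      rw [aeval_X, hg]
      simp
    have hPAg : ∀ v : V, MvPolynomial.aeval g (PA v) = (3456 / (18 + Y v)) * Y v := by
      intro v
      rw [hPA_def v]
      simp only [map_mul, map_add, map_pow, map_ofNat]
      rw [hga, hgb, hgv v]
      have h0 := hYden v
      field_simp
      ring
    have hPCg : ∀ v : V, MvPolynomial.aeval g (PC v) = 3456 / (18 + Y v) := by
      intro v
      rw [hPC_def v]
      simp only [map_mul, map_add, map_sub, map_pow, map_ofNat]
      rw [hga, hgb, hgv v]
      have h0 := hYden v
      field_simp
      ring
    have hu0 : ∀ v : V, (3456 : FractionRing (MvPolynomial V ℚ)) / (18 + Y v) ≠ 0 :=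
      fun v => div_ne_zero (by norm_num) (hYden v)
    have hRg : MvPolynomial.aeval g R
        = (∏ v : V, (3456 / (18 + Y v)) ^ d) * MvPolynomial.aeval Y P := by
      rw [hR_def, map_sum]
      have hPexp : MvPolynomial.aeval Y P
          = ∑ m ∈ P.support, (algebraMap ℚ (FractionRing (MvPolynomial V ℚ))) (coeff m P)
            * ∏ v : V, (Y v) ^ m v := by
        rw [MvPolynomial.aeval_def, MvPolynomial.eval₂_eq']
      have hterm : ∀ m ∈ P.support,
          MvPolynomial.aeval g (MvPolynomial.C (coeff m P) * ∏ v : V, (PA v ^ m v * PC v ^ (d - m v)))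
            = (∏ v : V, (3456 / (18 + Y v)) ^ d)
              * ((algebraMap ℚ (FractionRing (MvPolynomial V ℚ))) (coeff m P)
                * ∏ v : V, (Y v) ^ m v) := by
        intro m hm
        rw [map_mul, aeval_C, map_prod]
        have hper : ∀ v : V,
            MvPolynomial.aeval g (PA v ^ m v * PC v ^ (d - m v))
              = (3456 / (18 + Y v)) ^ d * (Y v) ^ m v := by
          intro v
          rw [map_mul, map_pow, map_pow, hPAg v, hPCg v, mul_pow,
            ← pow_sub_mul_pow ((3456 : FractionRing (MvPolynomial V ℚ)) / (18 + Y v))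
              (hmle m hm v)]
          ring
        rw [Finset.prod_congr rfl fun v _ => hper v, Finset.prod_mul_distrib]
        ring
      rw [Finset.sum_congr rfl hterm, ← Finset.mul_sum, ← hPexp]
    have hYP0 : MvPolynomial.aeval Y P = 0 := by
      have h0 : MvPolynomial.aeval g R = 0 := by rw [hR0, map_zero]
      rw [hRg] at h0
      rcases mul_eq_zero.mp h0 with h1 | h1
      · exfalso
        have h2 : (∏ v : V, ((3456 : FractionRing (MvPolynomial V ℚ)) / (18 + Y v)) ^ d) ≠ 0 := by
          rw [Finset.prod_ne_zero_iff]
          exact fun v _ => pow_ne_zero _ (hu0 v)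
        exact h2 h1
      · exact h1
    have hYalg : (MvPolynomial.aeval Y : MvPolynomial V ℚ →ₐ[ℚ] FractionRing (MvPolynomial V ℚ))
        = IsScalarTower.toAlgHom ℚ (MvPolynomial V ℚ) (FractionRing (MvPolynomial V ℚ)) := by
      apply MvPolynomial.algHom_ext
      intro v
      rw [aeval_X, hY v]
      rfl
    have hPmap : algebraMap (MvPolynomial V ℚ) (FractionRing (MvPolynomial V ℚ)) P = 0 := by
      have h5 := congrArg (fun f => f P) (congrArg DFunLike.coe hYalg)
      have h6 : (IsScalarTower.toAlgHom ℚ (MvPolynomial V ℚ) (FractionRing (MvPolynomial V ℚ))) P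
          = algebraMap (MvPolynomial V ℚ) (FractionRing (MvPolynomial V ℚ)) P := rfl
      rw [← h6, ← h5]
      exact hYP0
    apply hmapinj
    rw [map_zero]
    exact hPmap
  have hinjr' : Function.Injective (fun v : V => r' (Sum.inl v)) := halg.injective
  exact ⟨p', r', hpack', hmob, hip, hp'a, hp'b, hr'a, hr'b, hinjr', halg⟩

end Geometry
end SPP

open SPP in
/-- Any generic-radii sphere packing with contact graph `G ⊕ K₂` is Möbius-equivalent to
a standard form: the spheres of `K₂` are unit spheres centred at `(0,0,∓1)`, the other
centres lie in the `xy`-plane, and the remaining radii are injective and algebraically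
independent over `ℚ`. -/
theorem mobius_equiv_standard_form {V : Type*} [Fintype V] (G : SimpleGraph V)
    (p : V ⊕ Fin 2 → EuclideanSpace ℝ (Fin 3)) (r : V ⊕ Fin 2 → ℝ)
    (hP : IsSpherePacking 3 (joinK2 G) p r) (hr : GenericRadii r) :
    ∃ (p' : V ⊕ Fin 2 → EuclideanSpace ℝ (Fin 3)) (r' : V ⊕ Fin 2 → ℝ),
      IsSpherePacking 3 (joinK2 G) p' r' ∧ MobiusEquivalent p p' r r' ∧
      (∀ v : V, p' (Sum.inl v) 2 = 0) ∧
      p' (Sum.inr 0) 0 = 0 ∧ p' (Sum.inr 0) 1 = 0 ∧ p' (Sum.inr 0) 2 = -1 ∧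
      p' (Sum.inr 1) 0 = 0 ∧ p' (Sum.inr 1) 1 = 0 ∧ p' (Sum.inr 1) 2 = 1 ∧
      r' (Sum.inr 0) = 1 ∧ r' (Sum.inr 1) = 1 ∧
      Function.Injective (fun v : V => r' (Sum.inl v)) ∧
      AlgebraicIndependent ℚ (fun v : V => r' (Sum.inl v)) := by
  classical
  obtain ⟨hrinj, hralg⟩ := hr
  set e₃ : EuclideanSpace ℝ (Fin 3) := EuclideanSpace.single (2 : Fin 3) (1 : ℝ) with he₃
  have he₃n : ‖e₃‖ = 1 := by
    rw [he₃, EuclideanSpace.norm_single]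
    norm_num
  have he₃0 : e₃ 0 = 0 := by rw [he₃, EuclideanSpace.single_apply, if_neg (by decide)]
  have he₃1 : e₃ 1 = 0 := by rw [he₃, EuclideanSpace.single_apply, if_neg (by decide)]
  have he₃2 : e₃ 2 = 1 := by rw [he₃, EuclideanSpace.single_apply, if_pos rfl]
  have hne01 : r (Sum.inr 0) ≠ r (Sum.inr 1) := by
    intro h
    have h2 := hrinj h
    simp only [Sum.inr.injEq] at h2
    exact absurd h2 (by norm_num)
  rcases lt_or_gt_of_ne hne01 with hlt | hgt
  · -- r (inr 0) < r (inr 1) : use ia = 1, ib = 0 and e = -e₃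
    obtain ⟨p', r', hpack, hmob, hip, hpa, hpb, hra1, hrb1, hinj, halg⟩ :=
      main_standard G p r hP hralg 1 0 (by norm_num) hlt (-e₃) (by rw [norm_neg]; exact he₃n)
    have hpa' : p' (Sum.inr 1) = e₃ := by rw [hpa, neg_neg]
    refine ⟨p', r', hpack, hmob, ?_, ?_, ?_, ?_, ?_, ?_, ?_, hrb1, hra1, hinj, halg⟩
    · intro v
      have h1 := hip v
      rw [inner_neg_right] at h1
      have h2 : @inner ℝ _ _ (p' (Sum.inl v)) e₃ = 0 := by linarith [neg_eq_zero.mp h1]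
      rw [he₃, EuclideanSpace.inner_single_right] at h2
      simpa using h2
    · rw [hpb]; show -e₃ 0 = 0; rw [he₃0]; ring
    · rw [hpb]; show -e₃ 1 = 0; rw [he₃1]; ring
    · rw [hpb]; show -e₃ 2 = -1; rw [he₃2]
    · rw [hpa']; exact he₃0
    · rw [hpa']; exact he₃1
    · rw [hpa']; exact he₃2
  · -- r (inr 1) < r (inr 0) : use ia = 0, ib = 1 and e = e₃
    obtain ⟨p', r', hpack, hmob, hip, hpa, hpb, hra1, hrb1, hinj, halg⟩ :=
      main_standard G p r hP hralg 0 1 (by norm_num) hgt e₃ he₃n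
    refine ⟨p', r', hpack, hmob, ?_, ?_, ?_, ?_, ?_, ?_, ?_, hra1, hrb1, hinj, halg⟩
    · intro v
      have h2 := hip v
      rw [he₃, EuclideanSpace.inner_single_right] at h2
      simpa using h2
    · rw [hpa]; show -e₃ 0 = 0; rw [he₃0]; ring
    · rw [hpa]; show -e₃ 1 = 0; rw [he₃1]; ring
    · rw [hpa]; show -e₃ 2 = -1; rw [he₃2]
    · rw [hpb]; exact he₃0
    · rw [hpb]; exact he₃1
    · rw [hpb]; exact he₃2

end
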